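/- Let C: ℝ≥0 → ℝ≥0 be convex, strictly increasing with C(0) = 0 and inverse C⁻¹. If u ≥ (1/2)·V − C(P) for reals V, P ≥ 0 with (1/2)V in the range of C + C(P), then (1/2)·C⁻¹(V) ≤ C⁻¹(u) + P. -/

import Mathlib

/-- If C is convex, strictly increasing with C(0) = 0 and surjective onto
ℝ≥0, with inverse C⁻¹, and u ≥ (1/2)·V − C(P) with u, V, P ≥ 0, then
(1/2)·C⁻¹(V) ≤ C⁻¹(u) + P. -/
theorem half_inverse_value_bound
    (C Cinv : ℝ → ℝ)
    (hCconv : ConvexOn ℝ (Set.Ici (0:ℝ)) C)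
    (hCmono : StrictMonoOn C (Set.Ici (0:ℝ)))
    (hC0 : C 0 = 0)
    (hCsurj : ∀ y : ℝ, 0 ≤ y → ∃ x : ℝ, 0 ≤ x ∧ C x = y)
    (hinv : ∀ x ∈ Set.Ici (0:ℝ), Cinv (C x) = x)
    (u V P : ℝ) (hu : 0 ≤ u) (hV : 0 ≤ V) (hP : 0 ≤ P)
    (hbound : (1:ℝ)/2 * V - C P ≤ u) :
    (1:ℝ)/2 * Cinv V ≤ Cinv u + P := by
  -- C is nonnegative on Ici 0
  have hCnonneg : ∀ x : ℝ, 0 ≤ x → 0 ≤ C x := by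
    intro x hx
    have := (hCmono.le_iff_le (Set.mem_Ici.mpr le_rfl) (Set.mem_Ici.mpr hx)).mpr hx
    linarith [hC0]
  -- Cinv is monotone on nonnegative values
  have hmono : ∀ y z : ℝ, 0 ≤ y → y ≤ z → Cinv y ≤ Cinv z := by
    intro y z hy hyz
    obtain ⟨a, ha, hCa⟩ := hCsurj y hy
    obtain ⟨b, hb, hCb⟩ := hCsurj z (hy.trans hyz)
    rw [← hCa, ← hCb, hinv a (Set.mem_Ici.mpr ha), hinv b (Set.mem_Ici.mpr hb)]
    exact (hCmono.le_iff_le (Set.mem_Ici.mpr ha) (Set.mem_Ici.mpr hb)).mp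
      (by rw [hCa, hCb]; exact hyz)
  -- superadditivity of C
  have hsuper : ∀ a b : ℝ, 0 ≤ a → 0 ≤ b → C a + C b ≤ C (a + b) := by
    intro a b ha hb
    rcases eq_or_lt_of_le (by linarith : (0:ℝ) ≤ a + b) with hs | hs
    · have ha0 : a = 0 := by linarith
      have hb0 : b = 0 := by linarith
      simp [ha0, hb0, hC0]
    · set s := a + b with hsdef
      have hsa : C a ≤ (a / s) * C s := by
        have := hCconv.2 (Set.mem_Ici.mpr (le_of_lt hs)) (Set.mem_Ici.mpr le_rfl)
          (div_nonneg ha hs.le) (div_nonneg hb hs.le)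
          (by field_simp; linarith)
        simp only [smul_eq_mul, hC0, mul_zero, add_zero] at this
        have hax : a / s * s = a := by field_simp
        rw [hax] at this
        linarith
      have hsb : C b ≤ (b / s) * C s := by
        have := hCconv.2 (Set.mem_Ici.mpr (le_of_lt hs)) (Set.mem_Ici.mpr le_rfl)
          (div_nonneg hb hs.le) (div_nonneg ha hs.le)
          (by field_simp; linarith)
        simp only [smul_eq_mul, hC0, mul_zero, add_zero] at this
        have hbx : b / s * s = b := by field_simp
        rw [hbx] at this
        linarith
      have : a / s * C s + b / s * C s = C s := by
        field_simp
        ring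
      linarith
  -- Step 1: (1/2) * Cinv V ≤ Cinv ((1/2)*V)
  obtain ⟨x, hx, hCx⟩ := hCsurj V hV
  have hCinvV : Cinv V = x := by rw [← hCx, hinv x (Set.mem_Ici.mpr hx)]
  have hhalf : C (x / 2) ≤ (1:ℝ)/2 * V := by
    have := hCconv.2 (Set.mem_Ici.mpr hx) (Set.mem_Ici.mpr (le_refl (0:ℝ)))
      (by norm_num : (0:ℝ) ≤ 1/2) (by norm_num : (0:ℝ) ≤ 1/2) (by norm_num)
    simp only [smul_eq_mul, hC0, mul_zero, add_zero] at this
    rw [show x / 2 = 1/2 * x from by ring, ← hCx]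
    exact this
  have step1 : (1:ℝ)/2 * Cinv V ≤ Cinv ((1:ℝ)/2 * V) := by
    have h1 : Cinv (C (x/2)) ≤ Cinv ((1:ℝ)/2 * V) :=
      hmono _ _ (hCnonneg _ (by linarith)) hhalf
    rw [hinv (x/2) (Set.mem_Ici.mpr (by linarith))] at h1
    rw [hCinvV]; linarith
  -- Step 2: Cinv ((1/2)*V) ≤ Cinv (u + C P)
  have step2 : Cinv ((1:ℝ)/2 * V) ≤ Cinv (u + C P) :=
    hmono _ _ (by linarith) (by linarith)
  -- Step 3: Cinv (u + C P) ≤ Cinv u + P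
  obtain ⟨a, ha, hCa⟩ := hCsurj u hu
  have hCinvu : Cinv u = a := by rw [← hCa, hinv a (Set.mem_Ici.mpr ha)]
  have hsup : u + C P ≤ C (a + P) := by
    have := hsuper a P ha hP
    linarith [hCa ▸ this]
  have step3 : Cinv (u + C P) ≤ Cinv u + P := by
    have h1 : Cinv (u + C P) ≤ Cinv (C (a + P)) :=
      hmono _ _ (by have := hCnonneg P hP; linarith) hsup
    rw [hinv (a + P) (Set.mem_Ici.mpr (by linarith))] at h1
    rw [hCinvu]; linarith
  linarith
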